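/- Fix m ∈ ℕ, let n = m(m+1)/2, and define integers c_0,...,c_n by Π_{i=1}^m (1 - X^i) = Σ_{i=0}^n c_i X^i. For every non-empty subset S of {1,...,m} and every integer k ≥ n, p(k,S) = - Σ_{j=k-n}^{k-1} c_{k-j} · p(j,S), where p(j,S) is the number of partitions of j all of whose parts lie in S. -/

import Mathlib

/-- `pCount k S` is the number of partitions of `k` all of whose parts lie in `S`. -/
noncomputable def pCount (k : ℕ) (S : Finset ℕ) : ℕ :=
  Nat.card {P : Nat.Partition k // ∀ i ∈ P.parts, i ∈ S}

open Finset Polynomial PowerSeries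

/-- Erasing one copy of a part `s` gives an equivalence between partitions of `k` containing `s`
and partitions of `k - s`, with parts constrained to `S ∋ s`. -/
def eraseEquiv (k s : ℕ) (S : Finset ℕ) (hs : 0 < s) (hsS : s ∈ S) (hsk : s ≤ k) :
    {P : Nat.Partition k // (∀ i ∈ P.parts, i ∈ S) ∧ s ∈ P.parts} ≃
    {P : Nat.Partition (k - s) // ∀ i ∈ P.parts, i ∈ S} where
  toFun P := ⟨⟨P.1.parts.erase s,
      fun hi => P.1.parts_pos (Multiset.mem_of_mem_erase hi),
      by
        have h : s + (P.1.parts.erase s).sum = P.1.parts.sum := Multiset.sum_erase P.2.2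
        rw [P.1.parts_sum] at h
        omega⟩,
      fun i hi => P.2.1 i (Multiset.mem_of_mem_erase hi)⟩
  invFun P := ⟨⟨s ::ₘ P.1.parts,
      by
        intro i hi
        rcases Multiset.mem_cons.1 hi with rfl | hi
        · exact hs
        · exact P.1.parts_pos hi,
      by rw [Multiset.sum_cons, P.1.parts_sum]; omega⟩,
      ⟨fun i hi => by
        rcases Multiset.mem_cons.1 hi with rfl | hi
        · exact hsS
        · exact P.2 i hi,
        Multiset.mem_cons_self _ _⟩⟩
  left_inv P := by
    apply Subtype.ext
    apply Nat.Partition.ext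
    exact Multiset.cons_erase P.2.2
  right_inv P := by
    apply Subtype.ext
    apply Nat.Partition.ext
    exact Multiset.erase_cons_head _ _

lemma pCount_insert (s : ℕ) (hs : 0 < s) (S : Finset ℕ) (hsS : s ∉ S) (k : ℕ) :
    pCount k (insert s S) =
      pCount k S + (if s ≤ k then pCount (k - s) (insert s S) else 0) := by
  classical
  have hsplit :
      pCount k (insert s S) =
        Nat.card {P : Nat.Partition k // (∀ i ∈ P.parts, i ∈ insert s S) ∧ s ∈ P.parts} +
        Nat.card {P : Nat.Partition k // (∀ i ∈ P.parts, i ∈ insert s S) ∧ s ∉ P.parts} := by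
    rw [pCount, Nat.card_eq_fintype_card, Nat.card_eq_fintype_card, Nat.card_eq_fintype_card,
      Fintype.card_subtype, Fintype.card_subtype, Fintype.card_subtype]
    rw [← Finset.filter_filter, ← Finset.filter_filter,
      Finset.card_filter_add_card_filter_not]
  rw [hsplit, add_comm]
  congr 1
  · -- partitions avoiding s are partitions with parts in S
    rw [pCount]
    apply Nat.card_congr
    apply Equiv.subtypeEquivRight
    intro P
    constructor
    · rintro ⟨h1, h2⟩ i hi
      rcases Finset.mem_insert.1 (h1 i hi) with rfl | h
      · exact absurd hi h2
      · exact h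
    · intro h
      exact ⟨fun i hi => Finset.mem_insert_of_mem (h i hi), fun hc => hsS (h s hc)⟩
  · by_cases hsk : s ≤ k
    · rw [if_pos hsk, pCount]
      exact Nat.card_congr (eraseEquiv k s (insert s S) hs (Finset.mem_insert_self s S) hsk)
    · rw [if_neg hsk]
      rw [Nat.card_eq_zero]
      left
      constructor
      rintro ⟨P, h1, h2⟩
      exact hsk (le_trans (Multiset.le_sum_of_mem h2) (le_of_eq P.parts_sum))

lemma pCount_empty (k : ℕ) : pCount k ∅ = if k = 0 then 1 else 0 := by
  rcases Nat.eq_zero_or_pos k with rfl | hk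
  · rw [if_pos rfl, pCount]
    have : Unique {P : Nat.Partition 0 // ∀ i ∈ P.parts, i ∈ (∅ : Finset ℕ)} :=
      ⟨⟨⟨default, by simp⟩⟩, fun a => Subtype.ext (Subsingleton.elim _ _)⟩
    exact Nat.card_unique
  · rw [if_neg hk.ne', pCount, Nat.card_eq_zero]
    left
    constructor
    rintro ⟨P, hP⟩
    have : P.parts ≠ 0 := by
      intro h
      rw [← P.parts_sum, h] at hk
      simp at hk
    obtain ⟨a, ha⟩ := Multiset.exists_mem_of_ne_zero this
    simpa using hP a ha

lemma prod_mul_Pser (S : Finset ℕ) (hS : ∀ i ∈ S, 0 < i) :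
    (∏ i ∈ S, (1 - (PowerSeries.X : PowerSeries ℤ) ^ i)) *
      PowerSeries.mk (fun j => (pCount j S : ℤ)) = 1 := by
  classical
  induction S using Finset.induction_on with
  | empty =>
    rw [Finset.prod_empty, one_mul]
    ext n
    simp [pCount_empty, PowerSeries.coeff_one]
  | @insert s S hsS ih =>
    have hs : 0 < s := hS s (Finset.mem_insert_self s S)
    have key : (1 - (PowerSeries.X : PowerSeries ℤ) ^ s) *
        PowerSeries.mk (fun j => (pCount j (insert s S) : ℤ)) =
        PowerSeries.mk (fun j => (pCount j S : ℤ)) := by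
      ext k
      rw [sub_mul, one_mul, map_sub, PowerSeries.coeff_X_pow_mul']
      simp only [PowerSeries.coeff_mk]
      have := pCount_insert s hs S hsS k
      split_ifs with h
      · rw [this]; push_cast [if_pos h]; ring
      · rw [this]; push_cast [if_neg h]; ring
    rw [Finset.prod_insert hsS, mul_comm ((1 : PowerSeries ℤ) - PowerSeries.X ^ s), mul_assoc,
      key,
      ih (fun i hi => hS i (Finset.mem_insert_of_mem hi))]

theorem pCount_recurrence (m : ℕ) (S : Finset ℕ) (hS : S.Nonempty)
    (hSm : S ⊆ Finset.Icc 1 m) (k : ℕ) (hk : m * (m + 1) / 2 ≤ k) :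
    (pCount k S : ℤ) =
      - ∑ j ∈ Finset.Ico (k - m * (m + 1) / 2) k,
          (∏ i ∈ Finset.Icc 1 m, (1 - Polynomial.X ^ i : Polynomial ℤ)).coeff (k - j) *
            (pCount j S : ℤ) := by
  classical
  set n := m * (m + 1) / 2 with hn
  set Δ : Polynomial ℤ := ∏ i ∈ Finset.Icc 1 m, (1 - Polynomial.X ^ i) with hΔ
  set D : Polynomial ℤ := ∏ i ∈ Finset.Icc 1 m \ S, (1 - Polynomial.X ^ i) with hD
  -- degree bounds
  have hsum : ∑ i ∈ Finset.Icc 1 m, i = n := by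
    have e : Finset.range (m + 1) = insert 0 (Finset.Icc 1 m) := by
      ext x
      simp only [Finset.mem_range, Finset.mem_insert, Finset.mem_Icc, Nat.lt_succ_iff]
      omega
    have h0 : (0 : ℕ) ∉ Finset.Icc 1 m := by simp
    have hg := Finset.sum_range_id (m + 1)
    rw [e, Finset.sum_insert h0] at hg
    simpa [hn, Nat.mul_comm] using hg
  have hdegΔ : Δ.natDegree ≤ n := by
    rw [← hsum]
    refine le_trans (Polynomial.natDegree_prod_le _ _) (Finset.sum_le_sum ?_)
    intro i _
    refine le_trans (Polynomial.natDegree_sub_le _ _) ?_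
    simp
  have hdegD : D.natDegree < n := by
    obtain ⟨s, hsmem⟩ := hS
    have hs1 : 1 ≤ s := (Finset.mem_Icc.1 (hSm hsmem)).1
    have h1 : ∑ i ∈ Finset.Icc 1 m \ S, i + ∑ i ∈ S, i = n := by
      rw [Finset.sum_sdiff hSm, hsum]
    have h2 : 1 ≤ ∑ i ∈ S, i :=
      le_trans hs1 (Finset.single_le_sum (fun i _ => Nat.zero_le i) hsmem)
    have h3 : D.natDegree ≤ ∑ i ∈ Finset.Icc 1 m \ S, i := by
      refine le_trans (Polynomial.natDegree_prod_le _ _) (Finset.sum_le_sum ?_)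
      intro i _
      refine le_trans (Polynomial.natDegree_sub_le _ _) ?_
      simp
    omega
  -- power series identity
  have hpos : ∀ i ∈ S, 0 < i := fun i hi => (Finset.mem_Icc.1 (hSm hi)).1
  have h1 := prod_mul_Pser S hpos
  have h2 : (Δ : PowerSeries ℤ) * PowerSeries.mk (fun j => (pCount j S : ℤ)) =
      (D : PowerSeries ℤ) := by
    have hsplit : D * ∏ i ∈ S, (1 - Polynomial.X ^ i : Polynomial ℤ) = Δ :=
      Finset.prod_sdiff hSm
    have hc : (((∏ i ∈ S, (1 - Polynomial.X ^ i)) : Polynomial ℤ) : PowerSeries ℤ)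
        = ∏ i ∈ S, (1 - (PowerSeries.X : PowerSeries ℤ) ^ i) := by
      simp only [← Polynomial.coeToPowerSeries.ringHom_apply, map_prod, map_sub, map_one,
        map_pow]
      refine Finset.prod_congr rfl fun i _ => ?_
      rw [Polynomial.coeToPowerSeries.ringHom_apply, Polynomial.coe_X]
    rw [← hsplit, Polynomial.coe_mul, hc, mul_assoc, h1, mul_one]
  have h3 := congrArg (PowerSeries.coeff k) h2
  rw [PowerSeries.coeff_mul] at h3
  simp only [Polynomial.coeff_coe, PowerSeries.coeff_mk] at h3
  rw [Polynomial.coeff_eq_zero_of_natDegree_lt (lt_of_lt_of_le hdegD hk)] at h3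
  rw [Finset.Nat.sum_antidiagonal_eq_sum_range_succ
    (fun a b => Δ.coeff a * (pCount b S : ℤ))] at h3
  rw [← Finset.sum_range_reflect] at h3
  have h4 : ∑ j ∈ Finset.range (k + 1), Δ.coeff (k - j) * (pCount j S : ℤ) = 0 := by
    rw [← h3]
    refine Finset.sum_congr rfl fun j hj => ?_
    rw [Finset.mem_range] at hj
    have e1 : k + 1 - 1 - j = k - j := by omega
    have e2 : k - (k - j) = j := by omega
    rw [e1, e2]
  have hc0 : Δ.coeff 0 = 1 := by
    rw [hΔ, Polynomial.coeff_zero_eq_eval_zero, Polynomial.eval_prod]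
    refine Finset.prod_eq_one fun i hi => ?_
    have hi0 : i ≠ 0 := by
      have := (Finset.mem_Icc.1 hi).1; omega
    simp [hi0]
  rw [Finset.sum_range_succ, Nat.sub_self, hc0, one_mul] at h4
  rw [Finset.range_eq_Ico,
    ← Finset.sum_Ico_consecutive _ (Nat.zero_le (k - n)) (by omega : k - n ≤ k)] at h4
  have h5 : ∑ j ∈ Finset.Ico 0 (k - n), Δ.coeff (k - j) * (pCount j S : ℤ) = 0 := by
    refine Finset.sum_eq_zero fun j hj => ?_
    rw [Finset.mem_Ico] at hj
    have : Δ.natDegree < k - j := by omega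
    rw [Polynomial.coeff_eq_zero_of_natDegree_lt this, zero_mul]
  rw [h5, zero_add] at h4
  linarith
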